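/- arXiv:1512.00311 — 3 statements merged into one kernel-verified Lean document; each statement's English description precedes it below -/
import Mathlib

section
/- If A is real skew-symmetric and x^R ∈ K_q(A², Ab) satisfies (Ap)ᵀ(b - Ax^R) = 0 for all p ∈ K_q(A², Ab), then (Ap)ᵀ(b - Ax^R) = 0 for all p in the larger Krylov subspace K_{2q+1}(A, b). That is, the CGNR iterate satisfies the minimum-residual orthogonality condition on K_{2q+1}(A, b). -/
open Matrix

def krylov {n : ℕ} (M : Matrix (Fin n) (Fin n) ℝ) (v : Fin n → ℝ) (m : ℕ) :
    Submodule ℝ (Fin n → ℝ) :=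
  Submodule.span ℝ ((fun k => (M ^ k) *ᵥ v) '' Set.Iio m)

noncomputable def enorm {n : ℕ} (v : Fin n → ℝ) : ℝ := Real.sqrt (∑ i, v i ^ 2)

lemma skew_pow_odd {n : ℕ} (A : Matrix (Fin n) (Fin n) ℝ) (hA : Aᵀ = -A)
    {m : ℕ} (hm : Odd m) : (A ^ m)ᵀ = -(A ^ m) := by
  rw [transpose_pow, hA, hm.neg_pow]

lemma skew_self_dot {n : ℕ} (S : Matrix (Fin n) (Fin n) ℝ) (hS : Sᵀ = -S)
    (v : Fin n → ℝ) : v ⬝ᵥ (S *ᵥ v) = 0 := by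
  have h : v ⬝ᵥ (S *ᵥ v) = (Sᵀ *ᵥ v) ⬝ᵥ v := by
    rw [Matrix.dotProduct_mulVec, Matrix.mulVec_transpose]
  rw [hS] at h
  have h2 : (-S *ᵥ v) ⬝ᵥ v = -(v ⬝ᵥ (S *ᵥ v)) := by
    rw [Matrix.neg_mulVec, neg_dotProduct, dotProduct_comm]
  rw [h2] at h
  linarith

lemma odd_dot {n : ℕ} (A : Matrix (Fin n) (Fin n) ℝ) (hA : Aᵀ = -A)
    (b : Fin n → ℝ) {s t : ℕ} (h : Odd (s + t)) :
    ((A ^ s) *ᵥ b) ⬝ᵥ ((A ^ t) *ᵥ b) = 0 := by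
  have base : ((A ^ (t + s)) *ᵥ b) ⬝ᵥ b = 0 := by
    rw [dotProduct_comm]
    exact skew_self_dot _ (skew_pow_odd A hA (by rwa [add_comm] at h)) b
  have h1 : ((A ^ s) *ᵥ b) ⬝ᵥ ((A ^ t) *ᵥ b) = (((A ^ t)ᵀ * A ^ s) *ᵥ b) ⬝ᵥ b := by
    rw [Matrix.dotProduct_mulVec, ← Matrix.mulVec_transpose, Matrix.mulVec_mulVec]
  have h2 : (A ^ t)ᵀ * A ^ s = (-1 : Matrix (Fin n) (Fin n) ℝ) ^ t * A ^ (t + s) := by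
    rw [transpose_pow, hA, neg_pow, pow_add]
    rw [mul_assoc]
  rw [h1, h2]
  rcases Nat.even_or_odd t with ht | ht
  · rw [ht.neg_one_pow, one_mul, base]
  · rw [ht.neg_one_pow, neg_one_mul, Matrix.neg_mulVec, neg_dotProduct, base, neg_zero]

theorem cgnr_minres_extends {n : ℕ} (A : Matrix (Fin n) (Fin n) ℝ)
    (hA : Aᵀ = -A) (b xR : Fin n → ℝ) (q : ℕ)
    (hxR : xR ∈ krylov (A ^ 2) (A *ᵥ b) q)
    (horth : ∀ p ∈ krylov (A ^ 2) (A *ᵥ b) q, (A *ᵥ p) ⬝ᵥ (b - A *ᵥ xR) = 0) :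
    ∀ p ∈ krylov A b (2 * q + 1), (A *ᵥ p) ⬝ᵥ (b - A *ᵥ xR) = 0 := by
  set r := b - A *ᵥ xR with hr
  -- orthogonality of odd powers applied to A *ᵥ xR
  have hAx : ∀ m, Odd m → ((A ^ m) *ᵥ b) ⬝ᵥ (A *ᵥ xR) = 0 := by
    rintro m ⟨mm, rfl⟩
    refine Submodule.span_induction ?_ ?_ ?_ ?_ hxR
    · rintro x ⟨i, -, rfl⟩
      simp only
      have e1 : (A ^ 2) ^ i *ᵥ (A *ᵥ b) = A ^ (2 * i + 1) *ᵥ b := by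
        rw [Matrix.mulVec_mulVec, ← pow_mul, ← pow_succ]
      rw [e1, Matrix.mulVec_mulVec, ← pow_succ']
      exact odd_dot A hA b ⟨mm + i + 1, by ring⟩
    · simp
    · intro x y _ _ hx hy
      rw [Matrix.mulVec_add, dotProduct_add, hx, hy, add_zero]
    · intro c x _ hx
      rw [Matrix.mulVec_smul, dotProduct_smul, hx, smul_zero]
  have key : ∀ k ≤ 2 * q, ((A ^ (k + 1)) *ᵥ b) ⬝ᵥ r = 0 := by
    intro k hk
    rcases Nat.even_or_odd k with ⟨j, hj⟩ | ⟨j, hj⟩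
    · -- k = 2j even : use skew-symmetry
      rw [hr, dotProduct_sub]
      have h1 : ((A ^ (k + 1)) *ᵥ b) ⬝ᵥ b = 0 := by
        have := odd_dot A hA b (s := k + 1) (t := 0) ⟨j, by omega⟩
        rwa [pow_zero, Matrix.one_mulVec] at this
      rw [h1, hAx (k + 1) ⟨j, by omega⟩, sub_zero]
    · -- k = 2j + 1 odd : use horth
      have hjq : j < q := by omega
      have hmem : (A ^ 2) ^ j *ᵥ (A *ᵥ b) ∈ krylov (A ^ 2) (A *ᵥ b) q :=
        Submodule.subset_span ⟨j, hjq, rfl⟩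
      have := horth _ hmem
      rw [Matrix.mulVec_mulVec, Matrix.mulVec_mulVec] at this
      have e : A * (A ^ 2) ^ j * A = A ^ (k + 1) := by
        rw [← pow_mul, ← pow_succ', ← pow_succ]
        congr 1
        omega
      rwa [e] at this
      
  intro p hp
  refine Submodule.span_induction ?_ ?_ ?_ ?_ hp
  · rintro x ⟨k, hk, rfl⟩
    simp only [Set.mem_Iio] at hk
    simp only
    rw [Matrix.mulVec_mulVec, ← pow_succ']
    exact key k (by omega)
  · simp
  · intro x y _ _ hx hy
    rw [Matrix.mulVec_add, add_dotProduct, hx, hy, add_zero]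
  · intro c x _ hx
    rw [Matrix.mulVec_smul, smul_dotProduct, hx, smul_zero]
end

section
/- Let A be real skew-symmetric and nonsingular, and let x^R be the unique vector in K_q(A², Ab) minimizing ‖b - Az‖ over z ∈ K_q(A², Ab). Then x^R also minimizes ‖b - Az‖ over the larger subspace K_{2q+1}(A, b). -/
open Matrix

lemma enorm_eq {n : ℕ} (v : Fin n → ℝ) : _root_.enorm v = Real.sqrt (v ⬝ᵥ v) := by
  simp [_root_.enorm, dotProduct, sq]

lemma enorm_mono {n : ℕ} {v w : Fin n → ℝ} (h : v ⬝ᵥ v ≤ w ⬝ᵥ w) : _root_.enorm v ≤ _root_.enorm w := by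
  rw [enorm_eq, enorm_eq]; exact Real.sqrt_le_sqrt h

lemma dot_self_nonneg {n : ℕ} (v : Fin n → ℝ) : 0 ≤ v ⬝ᵥ v :=
  Finset.sum_nonneg fun i _ => mul_self_nonneg _

lemma dot_mulVec {n : ℕ} (M : Matrix (Fin n) (Fin n) ℝ) (u v : Fin n → ℝ) :
    (M *ᵥ u) ⬝ᵥ v = u ⬝ᵥ (Mᵀ *ᵥ v) := by
  rw [mulVec_transpose, dotProduct_comm u, ← dotProduct_mulVec, dotProduct_comm]

lemma skew_self {n : ℕ} {M : Matrix (Fin n) (Fin n) ℝ} (hM : Mᵀ = -M) (u : Fin n → ℝ) :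
    u ⬝ᵥ (M *ᵥ u) = 0 := by
  have h : u ⬝ᵥ (M *ᵥ u) = -(u ⬝ᵥ (M *ᵥ u)) := by
    conv_lhs => rw [dotProduct_comm, dot_mulVec, hM]
    rw [neg_mulVec, dotProduct_neg]
  linarith

lemma pow_skew {n : ℕ} {A : Matrix (Fin n) (Fin n) ℝ} (hA : Aᵀ = -A) {m : ℕ}
    (hm : Odd m) (u : Fin n → ℝ) : u ⬝ᵥ (A ^ m *ᵥ u) = 0 := by
  apply skew_self
  rw [transpose_pow, hA, hm.neg_pow]

lemma gen_orth {n : ℕ} {A : Matrix (Fin n) (Fin n) ℝ} (hA : Aᵀ = -A) (b : Fin n → ℝ)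
    {k l : ℕ} (h : Odd (k + l)) : (A ^ k *ᵥ b) ⬝ᵥ (A ^ l *ᵥ b) = 0 := by
  rw [dot_mulVec, transpose_pow, hA]
  rcases Nat.even_or_odd k with hk | hk
  · rw [hk.neg_pow, mulVec_mulVec, ← pow_add, pow_skew hA h]
  · rw [hk.neg_pow, neg_mulVec, dotProduct_neg, mulVec_mulVec, ← pow_add,
      pow_skew hA h, neg_zero]

lemma odd_gen {n : ℕ} (A : Matrix (Fin n) (Fin n) ℝ) (b : Fin n → ℝ) (k : ℕ) :
    ((A ^ 2) ^ k) *ᵥ (A *ᵥ b) = A ^ (2 * k + 1) *ᵥ b := by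
  rw [mulVec_mulVec, ← pow_mul, ← pow_succ]

theorem cgnr_minimizes_larger_subspace {n : ℕ} (A : Matrix (Fin n) (Fin n) ℝ)
    (hA : Aᵀ = -A) (hdet : A.det ≠ 0) (b xR : Fin n → ℝ) (q : ℕ)
    (hxR : xR ∈ krylov (A ^ 2) (A *ᵥ b) q)
    (hmin : ∀ z ∈ krylov (A ^ 2) (A *ᵥ b) q, _root_.enorm (b - A *ᵥ xR) ≤ _root_.enorm (b - A *ᵥ z)) :
    xR ∈ krylov A b (2 * q + 1) ∧
      ∀ z ∈ krylov A b (2 * q + 1), _root_.enorm (b - A *ᵥ xR) ≤ _root_.enorm (b - A *ᵥ z) := by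
  set r : Fin n → ℝ := b - A *ᵥ xR with hr
  -- inclusion of Krylov spaces
  have hincl : krylov (A ^ 2) (A *ᵥ b) q ≤ krylov A b (2 * q + 1) := by
    apply Submodule.span_le.mpr
    rintro _ ⟨k, hk, rfl⟩
    apply Submodule.subset_span
    exact ⟨2 * k + 1, by simp at hk ⊢; omega, (odd_gen A b k).symm⟩
  have hxR' : xR ∈ krylov A b (2 * q + 1) := hincl hxR
  -- orthogonality from minimization
  have ortho_even : ∀ v ∈ krylov (A ^ 2) (A *ᵥ b) q, r ⬝ᵥ (A *ᵥ v) = 0 := by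
    intro v hv
    set s : Fin n → ℝ := A *ᵥ v with hs
    set c : ℝ := r ⬝ᵥ s with hc
    set d : ℝ := s ⬝ᵥ s with hd
    have hd0 : 0 ≤ d := dot_self_nonneg s
    have key : ∀ t : ℝ, 0 ≤ t ^ 2 * d - 2 * t * c := by
      intro t
      have hz : xR + t • v ∈ krylov (A ^ 2) (A *ᵥ b) q :=
        Submodule.add_mem _ hxR (Submodule.smul_mem _ _ hv)
      have h1 := hmin _ hz
      have h2 : b - A *ᵥ (xR + t • v) = r - t • s := by
        rw [hr, hs, mulVec_add, mulVec_smul]; abel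
      rw [h2, enorm_eq, enorm_eq] at h1
      have h3 : r ⬝ᵥ r ≤ (r - t • s) ⬝ᵥ (r - t • s) :=
        (Real.sqrt_le_sqrt_iff (dot_self_nonneg _)).mp h1
      have h4 : (r - t • s) ⬝ᵥ (r - t • s) = r ⬝ᵥ r - 2 * t * c + t ^ 2 * d := by
        simp only [sub_dotProduct, dotProduct_sub, smul_dotProduct, dotProduct_smul,
          smul_eq_mul, hc, hd]
        rw [dotProduct_comm s r]
        ring
      rw [h4] at h3
      linarith
    rcases eq_or_lt_of_le hd0 with hdeq | hdpos
    · have h1 := key 1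
      have h2 := key (-1)
      show c = 0
      rw [← hdeq] at h1 h2
      linarith [h1, h2]
    · have hdne : d ≠ 0 := ne_of_gt hdpos
      have h := key (c / d)
      have e1 : (c / d) ^ 2 * d - 2 * (c / d) * c = -(c ^ 2 / d) := by
        field_simp
        ring
      rw [e1] at h
      have hc2 : c ^ 2 / d ≤ 0 := by linarith
      have hc2' : c ^ 2 ≤ 0 := by
        by_contra hpos
        push_neg at hpos
        have : 0 < c ^ 2 / d := div_pos hpos hdpos
        linarith
      have : c ^ 2 = 0 := le_antisymm hc2' (sq_nonneg c)
      exact sq_eq_zero_iff.mp this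
  -- elements of the small Krylov space ⟂ even powers
  have xR_orth : ∀ x ∈ krylov (A ^ 2) (A *ᵥ b) q, ∀ e : ℕ, Even e →
      x ⬝ᵥ (A ^ e *ᵥ b) = 0 := by
    intro x hx
    induction hx using Submodule.span_induction with
    | mem x hx =>
      intro e he
      obtain ⟨k, hk, rfl⟩ := hx
      show ((A ^ 2) ^ k *ᵥ (A *ᵥ b)) ⬝ᵥ (A ^ e *ᵥ b) = 0
      rw [odd_gen A b k]
      rcases he with ⟨j, rfl⟩
      exact gen_orth hA b ⟨k + j, by ring⟩
    | zero => intro e he; simp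
    | add x y hx hy ihx ihy => intro e he; rw [add_dotProduct, ihx e he, ihy e he]; ring
    | smul a x hx ih => intro e he; rw [smul_dotProduct, ih e he]; simp
  -- main orthogonality on generators
  have ortho_gen : ∀ k ≤ 2 * q, r ⬝ᵥ (A *ᵥ (A ^ k *ᵥ b)) = 0 := by
    intro k hk
    rw [mulVec_mulVec, ← pow_succ']
    rcases Nat.even_or_odd (k + 1) with he | ho
    · -- even: k+1 = j + j, 1 ≤ j ≤ q
      obtain ⟨j, hj⟩ := he
      have hj1 : 1 ≤ j := by omega
      have hjq : j - 1 < q := by omega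
      have hmem : ((A ^ 2) ^ (j - 1)) *ᵥ (A *ᵥ b) ∈ krylov (A ^ 2) (A *ᵥ b) q :=
        Submodule.subset_span ⟨j - 1, by simpa using hjq, rfl⟩
      have h := ortho_even _ hmem
      rw [odd_gen A b (j - 1), mulVec_mulVec, ← pow_succ'] at h
      have harg : 2 * (j - 1) + 1 + 1 = k + 1 := by omega
      rwa [harg] at h
    · -- odd
      rw [hr, sub_dotProduct, pow_skew hA ho b, dot_mulVec, hA, neg_mulVec,
        dotProduct_neg, mulVec_mulVec, ← pow_succ']
      have heven : Even (k + 1 + 1) := by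
        rcases ho with ⟨j, hj⟩
        exact ⟨j + 1, by omega⟩
      rw [xR_orth xR hxR (k + 1 + 1) heven]
      ring
  -- full orthogonality
  have ortho_all : ∀ w ∈ krylov A b (2 * q + 1), r ⬝ᵥ (A *ᵥ w) = 0 := by
    intro w hw
    induction hw using Submodule.span_induction with
    | mem x hx =>
      obtain ⟨k, hk, rfl⟩ := hx
      show r ⬝ᵥ (A *ᵥ (A ^ k *ᵥ b)) = 0
      exact ortho_gen k (by simp at hk; omega)
    | zero => simp
    | add x y hx hy ihx ihy => rw [mulVec_add, dotProduct_add, ihx, ihy]; ring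
    | smul a x hx ih => rw [mulVec_smul, dotProduct_smul, ih]; simp
  refine ⟨hxR', fun z hz => ?_⟩
  have hw : xR - z ∈ krylov A b (2 * q + 1) := Submodule.sub_mem _ hxR' hz
  have hzr : b - A *ᵥ z = r + A *ᵥ (xR - z) := by
    rw [hr, mulVec_sub]; abel
  apply enorm_mono
  rw [hzr]
  have hexp : (r + A *ᵥ (xR - z)) ⬝ᵥ (r + A *ᵥ (xR - z)) =
      r ⬝ᵥ r + 2 * (r ⬝ᵥ (A *ᵥ (xR - z))) + (A *ᵥ (xR - z)) ⬝ᵥ (A *ᵥ (xR - z)) := by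
    rw [add_dotProduct, dotProduct_add, dotProduct_add,
      dotProduct_comm (A *ᵥ (xR - z)) r]
    ring
  rw [hexp, ortho_all _ hw]
  have := dot_self_nonneg (A *ᵥ (xR - z))
  linarith
end

section
/- Let A be real skew-symmetric and nonsingular with Ax = b. Suppose z = z_e + z_o with z_e ∈ K_{q_e}(A², b) and z_o ∈ K_{q_o}(A², Ab). Then ‖z - x‖² = ‖z_o - x‖² + ‖z_e‖². -/
open Matrix

noncomputable def vecEnorm {n : ℕ} (v : Fin n → ℝ) : ℝ := Real.sqrt (∑ i, v i ^ 2)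

lemma enorm_sq {n : ℕ} (v : Fin n → ℝ) : vecEnorm v ^ 2 = v ⬝ᵥ v := by
  rw [vecEnorm, Real.sq_sqrt (Finset.sum_nonneg fun i _ => sq_nonneg _)]
  simp [dotProduct, sq]

lemma skew_quad {n : ℕ} (M : Matrix (Fin n) (Fin n) ℝ) (hM : Mᵀ = -M)
    (v : Fin n → ℝ) : v ⬝ᵥ (M *ᵥ v) = 0 := by
  have h : v ⬝ᵥ (M *ᵥ v) = (Mᵀ *ᵥ v) ⬝ᵥ v := by
    rw [dotProduct_mulVec, ← mulVec_transpose]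
  rw [hM, neg_mulVec, neg_dotProduct] at h
  have h2 := dotProduct_comm v (M *ᵥ v)
  linarith

lemma dot_mulVec_mulVec {n : ℕ} (M N : Matrix (Fin n) (Fin n) ℝ)
    (u : Fin n → ℝ) : (M *ᵥ u) ⬝ᵥ (N *ᵥ u) = u ⬝ᵥ ((Mᵀ * N) *ᵥ u) := by
  symm
  rw [← mulVec_mulVec, dotProduct_mulVec, vecMul_transpose]

lemma odd_skew {n : ℕ} (A : Matrix (Fin n) (Fin n) ℝ) (hA : Aᵀ = -A) (k : ℕ) :
    (A ^ (2 * k + 1))ᵀ = -(A ^ (2 * k + 1)) := by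
  rw [transpose_pow, hA, Odd.neg_pow ⟨k, by ring⟩]

theorem error_pythagorean {n : ℕ} (A : Matrix (Fin n) (Fin n) ℝ)
    (hA : Aᵀ = -A) (hdet : A.det ≠ 0) (b x z ze zo : Fin n → ℝ) (qe qo : ℕ)
    (hx : A *ᵥ x = b) (hz : z = ze + zo)
    (hze : ze ∈ krylov (A ^ 2) b qe) (hzo : zo ∈ krylov (A ^ 2) (A *ᵥ b) qo) :
    vecEnorm (z - x) ^ 2 = vecEnorm (zo - x) ^ 2 + vecEnorm ze ^ 2 := by
  subst hz
  -- orthogonality of generators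
  have gen : ∀ k : ℕ, (zo - x) ⬝ᵥ (((A ^ 2) ^ k) *ᵥ b) = 0 := by
    intro k
    have hxpart : x ⬝ᵥ (((A ^ 2) ^ k) *ᵥ b) = 0 := by
      rw [← hx, mulVec_mulVec, ← pow_mul, ← pow_succ]
      have : 2 * k + 1 = k * 2 + 1 := by ring
      exact this ▸ skew_quad _ (odd_skew A hA k) x
    have hzopart : zo ⬝ᵥ (((A ^ 2) ^ k) *ᵥ b) = 0 := by
      induction hzo using Submodule.span_induction with
      | mem v hv =>
        obtain ⟨j, _, rfl⟩ := hv
        simp only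
        rw [mulVec_mulVec, ← pow_mul, ← pow_succ, ← pow_mul,
          dot_mulVec_mulVec, odd_skew A hA j, neg_mul, ← pow_add]
        have h1 : 2 * j + 1 + 2 * k = 2 * (j + k) + 1 := by ring
        rw [h1, neg_mulVec, dotProduct_neg,
          skew_quad _ (odd_skew A hA (j + k)) b, neg_zero]
      | zero => simp
      | add u v _ _ hu hv => rw [add_dotProduct, hu, hv, add_zero]
      | smul a u _ hu => rw [smul_dotProduct, hu, smul_zero]
    rw [sub_dotProduct, hxpart, hzopart, sub_zero]
  have orth : (zo - x) ⬝ᵥ ze = 0 := by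
    induction hze using Submodule.span_induction with
    | mem v hv => obtain ⟨j, _, rfl⟩ := hv; exact gen j
    | zero => simp
    | add u v _ _ hu hv => rw [dotProduct_add, hu, hv, add_zero]
    | smul a u _ hu => rw [dotProduct_smul, hu, smul_zero]
  have hdecomp : ze + zo - x = (zo - x) + ze := by abel
  rw [hdecomp, enorm_sq, enorm_sq, enorm_sq, add_dotProduct, dotProduct_add,
    dotProduct_add, orth, dotProduct_comm ze (zo - x), orth]
  ring
end
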